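/- Let B be a set of b ≥ 3 blue points in convex position in the plane, and suppose R is a set of red points inside conv(B) such that no closed triangle spanned by three points of B is free of red points. Then |R| ≥ b − 2. -/

import Mathlib

abbrev Pt := ℝ × ℝ

def GenPos (P : Finset Pt) : Prop :=
  ∀ p ∈ P, ∀ q ∈ P, ∀ r ∈ P, p ≠ q → p ≠ r → q ≠ r → ¬ Collinear ℝ ({p, q, r} : Set Pt)

lemma collinear_of_det (p q r : Pt)
    (h : (q.1 - p.1) * (r.2 - p.2) - (q.2 - p.2) * (r.1 - p.1) = 0) :
    Collinear ℝ ({p, q, r} : Set Pt) := by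
  rcases eq_or_ne q p with hq | hq
  · rw [hq]
    have h2 : ({p, p, r} : Set Pt) = {p, r} := by simp
    rw [h2]; exact collinear_pair ℝ p r
  · rw [collinear_iff_of_mem (Set.mem_insert p {q, r})]
    refine ⟨q - p, fun x hx => ?_⟩
    rcases hx with rfl | rfl | rfl
    · exact ⟨0, by simp⟩
    · exact ⟨1, by simp⟩
    · rcases eq_or_ne (q.1 - p.1) 0 with h1 | h1
      · have h2 : q.2 - p.2 ≠ 0 := by
          intro h2; apply hq; have := sub_eq_zero.mp h1; have := sub_eq_zero.mp h2
          exact Prod.ext ‹q.1 = p.1› ‹q.2 = p.2›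
        refine ⟨(x.2 - p.2) / (q.2 - p.2), ?_⟩
        have hx1 : x.1 = p.1 := by
          have := h; rw [h1] at this; simp at this
          rcases this with h' | h' 
          · exact absurd h' h2
          · linarith [sub_eq_zero.mp h']
        apply Prod.ext <;> simp [Prod.smul_fst, Prod.smul_snd, smul_eq_mul]
        · rw [h1, hx1]; ring
        · field_simp; ring
      · refine ⟨(x.1 - p.1) / (q.1 - p.1), ?_⟩
        apply Prod.ext <;> simp [smul_eq_mul]
        · field_simp; ring
        · field_simp; nlinarith [h]

lemma div_lt_div_iff_neg' {a b c d : ℝ} (hb : b < 0) (hd : d < 0) :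
    a / b < c / d ↔ a * d < c * b := by
  rw [← neg_div_neg_eq a b, ← neg_div_neg_eq c d,
    div_lt_div_iff₀ (by linarith) (by linarith)]
  constructor <;> intro h <;> nlinarith

lemma div_le_div_iff_neg' {a b c d : ℝ} (hb : b < 0) (hd : d < 0) :
    a / b ≤ c / d ↔ a * d ≤ c * b := by
  rw [← neg_div_neg_eq a b, ← neg_div_neg_eq c d,
    div_le_div_iff₀ (by linarith) (by linarith)]
  constructor <;> intro h <;> nlinarith

set_option maxHeartbeats 2000000 in
lemma core (B R : Finset Pt)
    (hconvpos : ∀ p ∈ B, p ∉ convexHull ℝ (↑(B.erase p) : Set Pt))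
    (hbb : ∀ p ∈ B, ∀ q ∈ B, ∀ s ∈ B, p ≠ q → p ≠ s → q ≠ s →
      ¬ Collinear ℝ ({p, q, s} : Set Pt))
    (hrb : ∀ r ∈ R, ∀ p ∈ B, ∀ q ∈ B, p ≠ q → ¬ Collinear ℝ ({p, q, r} : Set Pt))
    (hno : ∀ s ⊆ B, s.card = 3 → ∃ r ∈ R, r ∈ convexHull ℝ (↑s : Set Pt)) :
    B.card ≤ R.card + 2 := by
  classical
  by_cases hB : B.card ≤ 2
  · omega
  push_neg at hB
  obtain ⟨v, hv⟩ := Finset.card_pos.mp (by omega : 0 < B.card)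
  set C := B.erase v with hC
  have hCcard : C.card = B.card - 1 := Finset.card_erase_of_mem hv
  have hCne : C.Nonempty := Finset.card_pos.mp (by omega)
  -- separation
  have hvC : v ∉ convexHull ℝ (↑C : Set Pt) := hconvpos v hv
  obtain ⟨f, u, hfu, huv⟩ := geometric_hahn_banach_closed_point
    (convex_convexHull ℝ _) (((Set.toFinite _).isCompact_convexHull ℝ).isClosed) hvC
  set A : ℝ := f (1, 0) with hA
  set A' : ℝ := f (0, 1) with hA'
  have hf : ∀ x : Pt, f x = A * x.1 + A' * x.2 := by
    intro x
    have hx : x = x.1 • ((1:ℝ), (0:ℝ)) + x.2 • ((0:ℝ), (1:ℝ)) := by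
      apply Prod.ext <;> simp
    calc f x = f (x.1 • ((1:ℝ), (0:ℝ)) + x.2 • ((0:ℝ), (1:ℝ))) := by rw [← hx]
    _ = A * x.1 + A' * x.2 := by
        rw [map_add, f.map_smul, f.map_smul, smul_eq_mul, smul_eq_mul, ← hA, ← hA']; ring
  -- linear functionals relative to v
  set δ : Pt → ℝ := fun x => A * (x.1 - v.1) + A' * (x.2 - v.2) with hδ
  set η : Pt → ℝ := fun x => -A' * (x.1 - v.1) + A * (x.2 - v.2) with hη
  set σ : Pt → ℝ := fun x => η x / δ x with hσ
  have hδneg : ∀ w ∈ C, δ w < 0 := by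
    intro w hw
    have h1 : f w < u := hfu w (subset_convexHull ℝ _ hw)
    have := hf w; have := hf v
    simp only [hδ]; nlinarith
  have hAA' : A^2 + A'^2 ≠ 0 := by
    obtain ⟨w0, hw0⟩ := hCne
    intro h0
    have hA0 : A = 0 := by nlinarith [sq_nonneg A, sq_nonneg A']
    have hA'0 : A' = 0 := by nlinarith [sq_nonneg A, sq_nonneg A']
    have := hδneg w0 hw0
    simp [hδ, hA0, hA'0] at this
  -- cross-product identity  : δ x * η y - δ y * η x = (A²+A'²) * det
  have hcross : ∀ x y : Pt, δ x * η y - δ y * η x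
      = (A^2 + A'^2) * ((x.1 - v.1) * (y.2 - v.2) - (x.2 - v.2) * (y.1 - v.1)) := by
    intro x y; simp only [hδ, hη]; ring
  have hcol0 : ∀ x y : Pt, δ x * η y - δ y * η x = 0 → Collinear ℝ ({v, x, y} : Set Pt) := by
    intro x y hxy
    rw [hcross] at hxy
    exact collinear_of_det v x y ((mul_eq_zero.mp hxy).resolve_left hAA')
  -- distinct slopes on C
  have hσinj : ∀ w ∈ C, ∀ w' ∈ C, w ≠ w' → σ w ≠ σ w' := by
    intro w hw w' hw' hne heq
    have hδw := hδneg w hw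
    have hδw' := hδneg w' hw'
    simp only [hσ] at heq
    have h0 : η w * δ w' = η w' * δ w :=
      (div_eq_div_iff (ne_of_lt hδw) (ne_of_lt hδw')).mp heq
    have hvw : v ≠ w := fun h => (Finset.mem_erase.mp hw).1 h.symm
    have hvw' : v ≠ w' := fun h => (Finset.mem_erase.mp hw').1 h.symm
    exact hbb v hv w (Finset.mem_of_mem_erase hw) w' (Finset.mem_of_mem_erase hw')
      hvw hvw' hne (hcol0 w w' (by linarith))
  -- the triangle lemma
  have hK2 : ∀ w ∈ C, ∀ w' ∈ C, σ w < σ w' →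
      ∃ r ∈ R, δ r < 0 ∧ σ w < σ r ∧ σ r < σ w' := by
    intro w hw w' hw' hlt
    have hδw := hδneg w hw
    have hδw' := hδneg w' hw'
    have hne : w ≠ w' := fun h => by rw [h] at hlt; exact lt_irrefl _ hlt
    have hvw : v ≠ w := fun h => (Finset.mem_erase.mp hw).1 h.symm
    have hvw' : v ≠ w' := fun h => (Finset.mem_erase.mp hw').1 h.symm
    have hwB : w ∈ B := Finset.mem_of_mem_erase hw
    have hw'B : w' ∈ B := Finset.mem_of_mem_erase hw'
    have hsub : ({v, w, w'} : Finset Pt) ⊆ B := by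
      intro x hx; simp only [Finset.mem_insert, Finset.mem_singleton] at hx
      rcases hx with rfl | rfl | rfl <;> assumption
    have hcard : ({v, w, w'} : Finset Pt).card = 3 := by
      rw [Finset.card_insert_of_notMem (by simp [hvw, hvw']),
        Finset.card_insert_of_notMem (by simp [hne]), Finset.card_singleton]
    obtain ⟨r, hrR, hrhull⟩ := hno _ hsub hcard
    refine ⟨r, hrR, ?_⟩
    have hrhull' : r ∈ convexHull ℝ ({v, w, w'} : Set Pt) := by
      simpa using hrhull
    rw [convexHull_insert (by exact ⟨w, Set.mem_insert _ _⟩), mem_convexJoin] at hrhull'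
    obtain ⟨xv, hxv, z, hz, hrseg⟩ := hrhull'
    rw [Set.mem_singleton_iff] at hxv
    rw [hxv] at hrseg
    rw [convexHull_pair] at hz
    obtain ⟨c, d, hc, hd, hcd, hzeq⟩ := hz
    obtain ⟨e, k, he, hk, hek, hreq⟩ := hrseg
    have hd' : d = 1 - c := by linarith
    have he' : e = 1 - k := by linarith
    subst hd'; subst he'
    have hf1 : (1-k)*v.1 + k*(c*w.1 + (1-c)*w'.1) = r.1 := by
      have h1 := congrArg Prod.fst hreq
      have h2 := congrArg Prod.fst hzeq
      simp only [Prod.fst_add, Prod.smul_fst, smul_eq_mul] at h1 h2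
      rw [← h1, ← h2]
    have hf2 : (1-k)*v.2 + k*(c*w.2 + (1-c)*w'.2) = r.2 := by
      have h1 := congrArg Prod.snd hreq
      have h2 := congrArg Prod.snd hzeq
      simp only [Prod.snd_add, Prod.smul_snd, smul_eq_mul] at h1 h2
      rw [← h1, ← h2]
    have hδr : δ r = k*c * δ w + k*(1-c) * δ w' := by
      simp only [hδ]; linear_combination (-A) * hf1 - A' * hf2
    have hηr : η r = k*c * η w + k*(1-c) * η w' := by
      simp only [hη]; linear_combination A' * hf1 - A * hf2
    have hrv : r ≠ v := by
      intro h
      exact hrb r hrR v hv w hwB hvw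
        ((collinear_pair ℝ v w).subset (by intro x hx; simp at hx ⊢; rcases hx with h'|h'|h' <;> simp [h', h]))
    have hkc : 0 ≤ k*c := mul_nonneg hk hc
    have hkd : 0 ≤ k*(1-c) := mul_nonneg hk (by linarith)
    have hδrneg : δ r < 0 := by
      rcases lt_or_eq_of_le (by rw [hδr]; nlinarith : δ r ≤ 0) with h | h
      · exact h
      · exfalso
        have h1 : k*c = 0 := by nlinarith
        have h2 : k*(1-c) = 0 := by nlinarith
        have hk0 : k = 0 := by nlinarith
        rw [hk0] at hf1 hf2
        simp at hf1 hf2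
        exact hrv (Prod.ext hf1.symm hf2.symm)
    refine ⟨hδrneg, ?_, ?_⟩
    · have hcross' : η w * δ w' < η w' * δ w := by
        have := (div_lt_div_iff_neg' hδw hδw').mp hlt
        linarith
      have hle : σ w ≤ σ r := by
        simp only [hσ]; rw [div_le_div_iff_neg' hδw hδrneg]
        rw [hδr, hηr]; nlinarith
      rcases lt_or_eq_of_le hle with h | h
      · exact h
      · exfalso
        simp only [hσ] at h
        have h0 : η w * δ r = η r * δ w :=
          (div_eq_div_iff (ne_of_lt hδw) (ne_of_lt hδrneg)).mp h
        exact hrb r hrR v hv w hwB hvw (hcol0 w r (by linarith))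
    · have hcross' : η w * δ w' < η w' * δ w := by
        have := (div_lt_div_iff_neg' hδw hδw').mp hlt
        linarith
      have hle : σ r ≤ σ w' := by
        simp only [hσ]; rw [div_le_div_iff_neg' hδrneg hδw']
        rw [hδr, hηr]; nlinarith
      rcases lt_or_eq_of_le hle with h | h
      · exact h
      · exfalso
        simp only [hσ] at h
        have h0 : η r * δ w' = η w' * δ r :=
          (div_eq_div_iff (ne_of_lt hδrneg) (ne_of_lt hδw')).mp h
        exact hrb r hrR v hv w' hw'B hvw' (hcol0 w' r (by linarith))
  -- counting
  set S := C.image σ with hS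
  have hScard : S.card = C.card := Finset.card_image_of_injOn (by
    intro x hx y hy hxy
    by_contra hne; exact hσinj x hx y hy hne hxy)
  have hSne : S.Nonempty := hCne.image σ
  set smax := S.max' hSne with hsmax
  set T := S.erase smax with hT
  have hTcard : T.card = B.card - 2 := by
    rw [hT, Finset.card_erase_of_mem (S.max'_mem hSne), hScard, hCcard]; omega
  have hTS : T ⊆ S := Finset.erase_subset _ _
  have key : ∀ t ∈ T, ∃ r ∈ R, t < σ r ∧ ∀ s ∈ S, t < s → σ r < s := by
    intro t ht
    have htS : t ∈ S := hTS ht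
    have htlt : t < smax :=
      lt_of_le_of_ne (S.le_max' t htS) (Finset.ne_of_mem_erase ht)
    have hFne : (S.filter (fun s => t < s)).Nonempty :=
      ⟨smax, Finset.mem_filter.mpr ⟨S.max'_mem hSne, htlt⟩⟩
    set t' := (S.filter (fun s => t < s)).min' hFne with ht'
    have ht'mem := (S.filter (fun s => t < s)).min'_mem hFne
    rw [Finset.mem_filter] at ht'mem
    obtain ⟨ht'S, htt'⟩ := ht'mem
    obtain ⟨w, hw, hwt⟩ := Finset.mem_image.mp htS
    obtain ⟨w', hw', hw't⟩ := Finset.mem_image.mp ht'S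
    have hlt : σ w < σ w' := by rw [hwt, hw't]; exact htt'
    obtain ⟨r, hrR, _, h1, h2⟩ := hK2 w hw w' hw' hlt
    refine ⟨r, hrR, by rw [← hwt]; exact h1, ?_⟩
    intro s hsS hts
    have : t' ≤ s := Finset.min'_le _ s (Finset.mem_filter.mpr ⟨hsS, hts⟩)
    calc σ r < σ w' := h2
    _ = t' := hw't
    _ ≤ s := this
  have key2 : ∀ t : ℝ, ∃ r : Pt, t ∈ T → (r ∈ R ∧ t < σ r ∧ ∀ s ∈ S, t < s → σ r < s) := by
    intro t
    by_cases ht : t ∈ T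
    · obtain ⟨r, h1, h2, h3⟩ := key t ht
      exact ⟨r, fun _ => ⟨h1, h2, h3⟩⟩
    · exact ⟨v, fun h => absurd h ht⟩
  choose ρ hρ using key2
  have hmono : ∀ t1 ∈ T, ∀ t2 ∈ T, t1 < t2 → σ (ρ t1) < σ (ρ t2) := by
    intro t1 ht1 t2 ht2 h12
    obtain ⟨_, _, h3⟩ := hρ t1 ht1
    obtain ⟨_, h2', _⟩ := hρ t2 ht2
    exact lt_trans (h3 t2 (hTS ht2) h12) h2'
  have hinj : Set.InjOn ρ ↑T := by
    intro t1 ht1 t2 ht2 heq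
    rcases lt_trichotomy t1 t2 with h | h | h
    · exact absurd (congrArg σ heq) (ne_of_lt (hmono t1 ht1 t2 ht2 h))
    · exact h
    · exact absurd (congrArg σ heq).symm (ne_of_lt (hmono t2 ht2 t1 ht1 h))
  have := Finset.card_le_card_of_injOn ρ (fun t ht => (hρ t ht).1) hinj
  omega

/-- If `B` is a set of `b ≥ 3` blue points in convex position and `R` is a set of red points
inside `conv(B)` such that every closed triangle spanned by three blue points contains a red
point, then `|R| ≥ b - 2`. -/
theorem stmt12 (B R : Finset Pt) (hb : 3 ≤ B.card)
    (hconvpos : ∀ p ∈ B, p ∉ convexHull ℝ (↑(B.erase p) : Set Pt))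
    (hgp : GenPos (B ∪ R))
    (hR : ∀ r ∈ R, r ∈ convexHull ℝ (↑B : Set Pt))
    (hno : ∀ s ⊆ B, s.card = 3 → ∃ r ∈ R, r ∈ convexHull ℝ (↑s : Set Pt)) :
    B.card ≤ R.card + 2 := by
  classical
  have hBR : (B \ R).card + (B ∩ R).card = B.card := Finset.card_sdiff_add_card_inter B R
  have hRB : (R \ B).card + (R ∩ B).card = R.card := Finset.card_sdiff_add_card_inter R B
  have hint : (B ∩ R).card = (R ∩ B).card := by rw [Finset.inter_comm]
  have hcore : (B \ R).card ≤ (R \ B).card + 2 := by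
    apply core (B \ R) (R \ B)
    · intro p hp
      have hpB : p ∈ B := (Finset.mem_sdiff.mp hp).1
      intro hmem'
      apply hconvpos p hpB
      apply convexHull_mono _ hmem'
      exact_mod_cast Finset.coe_subset.mpr (Finset.erase_subset_erase p (Finset.sdiff_subset))
    · intro p hp q hq s hs hpq hps hqs
      exact hgp p (Finset.mem_union_left _ (Finset.mem_sdiff.mp hp).1)
        q (Finset.mem_union_left _ (Finset.mem_sdiff.mp hq).1)
        s (Finset.mem_union_left _ (Finset.mem_sdiff.mp hs).1) hpq hps hqs
    · intro r hr p hp q hq hpq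
      have hrR : r ∈ R := (Finset.mem_sdiff.mp hr).1
      have hrB : r ∉ B := (Finset.mem_sdiff.mp hr).2
      have hpB : p ∈ B := (Finset.mem_sdiff.mp hp).1
      have hqB : q ∈ B := (Finset.mem_sdiff.mp hq).1
      exact hgp p (Finset.mem_union_left _ hpB) q (Finset.mem_union_left _ hqB)
        r (Finset.mem_union_right _ hrR) hpq
        (fun h => hrB (h ▸ hpB)) (fun h => hrB (h ▸ hqB))
    · intro s hs hcard
      have hsB : s ⊆ B := hs.trans Finset.sdiff_subset
      obtain ⟨r, hrR, hrhull⟩ := hno s hsB hcard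
      refine ⟨r, Finset.mem_sdiff.mpr ⟨hrR, ?_⟩, hrhull⟩
      intro hrB
      by_cases hrs : r ∈ s
      · exact (Finset.mem_sdiff.mp (hs hrs)).2 hrR
      · apply hconvpos r hrB
        apply convexHull_mono _ hrhull
        intro x hx
        simp only [Finset.coe_erase, Set.mem_diff, Set.mem_singleton_iff]
        refine ⟨hsB (by exact_mod_cast hx), ?_⟩
        intro h
        exact hrs (by rw [h] at hx; exact_mod_cast hx)
      -- end
  have h2 : (B ∩ R).card ≤ R.card := by
    apply Finset.card_le_card; exact Finset.inter_subset_right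
  omega
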